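/- For every 0 ≤ p < 1/2, the following identity holds: (1/2 − p) · Σ_{k=0}^∞ ((1−p)/2)^k · Σ_{j=0}^k (binom(k,j))² · (p/(1−p))^j = 1; in particular the double series converges. -/

import Mathlib

open Finset Filter



lemma aux_choose_swap (K i m : ℕ) :
    K.choose i * (K - i).choose m = K.choose m * (K - m).choose i := by
  rcases le_or_gt (i + m) K with h | h
  · have e1 := Nat.choose_mul (n := K) (show i ≤ i + m from Nat.le_add_right _ _)
    have e2 := Nat.choose_mul (n := K) (show m ≤ i + m from Nat.le_add_left _ _)
    simp only [Nat.add_sub_cancel, Nat.add_sub_cancel_left] at e1 e2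
    rw [← e1, ← e2]
    congr 1
    rw [← Nat.choose_symm (Nat.le_add_left _ _)]
    simp
  · rcases le_or_gt i K with hi | hi
    · have : K - i < m := by omega
      rw [Nat.choose_eq_zero_of_lt this]
      rcases le_or_gt m K with hm | hm
      · rw [Nat.choose_eq_zero_of_lt (show K - m < i by omega)]; ring
      · rw [Nat.choose_eq_zero_of_lt hm]; ring
    · rw [Nat.choose_eq_zero_of_lt hi]
      rcases le_or_gt m K with hm | hm
      · rw [Nat.choose_eq_zero_of_lt (show K - m < i by omega)]; ring
      · rw [Nat.choose_eq_zero_of_lt hm]; ring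

-- key term identity
lemma aux_key' (k m i : ℕ) :
    k.choose (m + i) * (m + i).choose m * (k - (m + i)).choose m
      = k.choose (2 * m) * (2 * m).choose m * (k - 2 * m).choose i := by
  rcases le_or_gt (2 * m + i) k with h | h
  · have h1 : m + i ≤ k := by omega
    have e1 := Nat.choose_mul (n := k) (show m ≤ m + i from Nat.le_add_right _ _)
    -- e1 : k.choose (m+i) * (m+i).choose m = k.choose m * (k-m).choose i
    have e2 := Nat.choose_mul (n := k) (show m ≤ 2 * m by omega)
    simp only [Nat.add_sub_cancel_left, show 2 * m - m = m by omega] at e1 e2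
    rw [e1, e2]
    have hsub : k - (m + i) = (k - m) - i := by omega
    have hsub2 : k - 2 * m = (k - m) - m := by omega
    rw [hsub, hsub2, mul_assoc, mul_assoc, aux_choose_swap (k - m) i m]
  · -- both sides zero
    rcases le_or_gt (m + i) k with h1 | h1
    · have : k - (m + i) < m := by omega
      rw [Nat.choose_eq_zero_of_lt this]
      rcases le_or_gt (2 * m) k with h2 | h2
      · rw [Nat.choose_eq_zero_of_lt (show k - 2 * m < i by omega)]; ring
      · rw [Nat.choose_eq_zero_of_lt h2]; ring
    · rw [Nat.choose_eq_zero_of_lt h1]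
      rcases le_or_gt (2 * m) k with h2 | h2
      · rw [Nat.choose_eq_zero_of_lt (show k - 2 * m < i by omega)]; ring
      · rw [Nat.choose_eq_zero_of_lt h2]; ring


lemma aux_key (k m i : ℕ) :
    k.choose (m + i) * ((m + i).choose m * (k - (m + i)).choose m)
      = k.choose (2 * m) * ((2 * m).choose m * (k - 2 * m).choose i) := by
  rw [← mul_assoc, ← mul_assoc]
  exact aux_key' k m i



lemma vandermonde_sq {j k : ℕ} (hjk : j ≤ k) :
    k.choose j = ∑ a ∈ range (k + 1), j.choose a * (k - j).choose a := by
  have h0 : j + (k - j) = k := by omega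
  have h := Nat.add_choose_eq j (k - j) (k - j)
  rw [h0] at h
  rw [← Nat.choose_symm hjk, h, Finset.Nat.sum_antidiagonal_eq_sum_range_succ_mk]
  have e1 : ∀ a ∈ range (k - j + 1),
      j.choose a * (k - j).choose (k - j - a) = j.choose a * (k - j).choose a := by
    intro a ha
    simp only [mem_range] at ha
    rw [Nat.choose_symm (show a ≤ k - j by omega)]
  rw [Finset.sum_congr rfl e1]
  apply Finset.sum_subset
  · intro a ha; simp only [mem_range] at *; omega
  · intro a _ ha
    simp only [mem_range, not_lt] at ha
    rw [Nat.choose_eq_zero_of_lt (show k - j < a by omega)]; ring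




lemma stepA (p q : ℝ) (hpq : p + q = 1) (k : ℕ) :
    ∑ j ∈ range (k + 1), (k.choose j : ℝ) ^ 2 * p ^ j * q ^ (k - j)
      = ∑ m ∈ range (k + 1), (k.choose (2 * m) : ℝ) * ((2 * m).choose m : ℝ) * (p * q) ^ m := by
  have L1 : ∀ j ∈ range (k + 1),
      (k.choose j : ℝ) ^ 2 * p ^ j * q ^ (k - j)
        = ∑ m ∈ range (k + 1),
            (k.choose j * (j.choose m * (k - j).choose m) : ℕ) * p ^ j * q ^ (k - j) := by
    intro j hj
    simp only [mem_range] at hj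
    have hc : (k.choose j : ℝ) ^ 2
        = ∑ m ∈ range (k + 1), ((k.choose j * (j.choose m * (k - j).choose m) : ℕ) : ℝ) := by
      push_cast
      rw [pow_two, ← Finset.mul_sum]
      congr 1
      exact_mod_cast vandermonde_sq (show j ≤ k by omega)
    rw [hc, Finset.sum_mul, Finset.sum_mul]
  rw [Finset.sum_congr rfl L1, Finset.sum_comm]
  apply Finset.sum_congr rfl
  intro m hm
  have ext : ∑ j ∈ range (k + 1),
      ((k.choose j * (j.choose m * (k - j).choose m) : ℕ) : ℝ) * p ^ j * q ^ (k - j)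
      = ∑ j ∈ range (m + (k + 1)),
      ((k.choose j * (j.choose m * (k - j).choose m) : ℕ) : ℝ) * p ^ j * q ^ (k - j) := by
    apply Finset.sum_subset
    · intro a ha; simp only [mem_range] at *; omega
    · intro a _ ha
      simp only [mem_range, not_lt] at ha
      rw [Nat.choose_eq_zero_of_lt (show k < a by omega)]
      push_cast; ring
  rw [ext, Finset.sum_range_add]
  have z1 : ∀ j ∈ range m,
      ((k.choose j * (j.choose m * (k - j).choose m) : ℕ) : ℝ) * p ^ j * q ^ (k - j) = 0 := by
    intro j hj
    simp only [mem_range] at hj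
    rw [Nat.choose_eq_zero_of_lt hj]
    push_cast; ring
  rw [Finset.sum_congr rfl z1, Finset.sum_const_zero, zero_add]
  have key : ∀ i : ℕ, ((k.choose (m + i) * ((m + i).choose m * (k - (m + i)).choose m) : ℕ) : ℝ)
      = ((k.choose (2 * m) * ((2 * m).choose m * (k - 2 * m).choose i) : ℕ) : ℝ) := by
    intro i; exact_mod_cast congrArg (Nat.cast (R := ℝ)) (aux_key k m i)
  rcases le_or_gt (2 * m) k with h2 | h2
  · have shrink : ∑ i ∈ range (k + 1),
        ((k.choose (m + i) * ((m + i).choose m * (k - (m + i)).choose m) : ℕ) : ℝ)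
          * p ^ (m + i) * q ^ (k - (m + i))
        = ∑ i ∈ range (k - 2 * m + 1),
        ((k.choose (2 * m)) : ℝ) * ((2 * m).choose m : ℝ) * (p ^ m * q ^ m)
          * (((k - 2 * m).choose i : ℝ) * p ^ i * q ^ (k - 2 * m - i)) := by
      rw [← Finset.sum_subset (show range (k - 2 * m + 1) ⊆ range (k + 1) by
        intro a ha; simp only [mem_range] at *; omega)]
      · apply Finset.sum_congr rfl
        intro i hi
        simp only [mem_range] at hi
        rw [key i]
        have e1 : k - (m + i) = m + (k - 2 * m - i) := by omega
        rw [e1, pow_add, pow_add]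
        push_cast; ring
      · intro i _ hi
        simp only [mem_range, not_lt] at hi
        rw [key i, Nat.choose_eq_zero_of_lt (show k - 2 * m < i by omega)]
        push_cast; ring
    rw [shrink, ← Finset.mul_sum]
    have hsum : ∑ i ∈ range (k - 2 * m + 1),
        ((k - 2 * m).choose i : ℝ) * p ^ i * q ^ (k - 2 * m - i) = 1 := by
      have h := add_pow p q (k - 2 * m)
      rw [hpq, one_pow] at h
      calc ∑ i ∈ range (k - 2 * m + 1), ((k - 2 * m).choose i : ℝ) * p ^ i * q ^ (k - 2 * m - i)
          = ∑ i ∈ range (k - 2 * m + 1), p ^ i * q ^ (k - 2 * m - i) * ((k - 2 * m).choose i : ℝ) := by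
            apply Finset.sum_congr rfl; intro i _; ring
        _ = 1 := h.symm
    rw [hsum, mul_one, mul_pow]
  · have hzn : k.choose (2 * m) = 0 := Nat.choose_eq_zero_of_lt h2
    rw [Finset.sum_eq_zero, hzn]
    · push_cast; ring
    · intro i _
      rw [key i, hzn]
      push_cast; ring


lemma sumC (r : ℕ) : Summable (fun k : ℕ => (k.choose r : ℝ) * (1/2 : ℝ) ^ k) := by
  apply Summable.of_nonneg_of_le (fun k => by positivity)
    (fun k => ?_) (summable_pow_mul_geometric_of_norm_lt_one r (r := (1/2:ℝ)) (by norm_num))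
  have : (k.choose r : ℝ) ≤ (k : ℝ) ^ r := by exact_mod_cast Nat.choose_le_pow k r
  have h2 : (0:ℝ) ≤ (1/2:ℝ)^k := by positivity
  calc (k.choose r : ℝ) * (1/2:ℝ)^k ≤ (k:ℝ)^r * (1/2:ℝ)^k := by
        exact mul_le_mul_of_nonneg_right this h2
    _ = _ := by norm_num

lemma tsumC (r : ℕ) : ∑' k : ℕ, (k.choose r : ℝ) * (1/2 : ℝ) ^ k = 2 := by
  induction r with
  | zero =>
    simp only [Nat.choose_zero_right, Nat.cast_one, one_mul]
    rw [tsum_geometric_of_lt_one (by norm_num) (by norm_num)]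
    norm_num
  | succ r ih =>
    have hs := sumC (r + 1)
    have h0 := Summable.tsum_eq_zero_add hs
    have hshift : ∀ k : ℕ, ((k+1).choose (r+1) : ℝ) * (1/2:ℝ)^(k+1)
        = (1/2) * ((k.choose r : ℝ) * (1/2)^k) + (1/2) * ((k.choose (r+1) : ℝ) * (1/2)^k) := by
      intro k
      rw [Nat.choose_succ_succ]
      push_cast
      ring
    rw [show (Nat.choose 0 (r+1) : ℝ) * (1/2:ℝ)^0 = 0 by simp [Nat.choose_eq_zero_of_lt]] at h0
    rw [zero_add] at h0
    have : ∑' k : ℕ, ((k+1).choose (r+1) : ℝ) * (1/2:ℝ)^(k+1)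
        = (1/2) * (∑' k : ℕ, (k.choose r : ℝ) * (1/2:ℝ)^k)
          + (1/2) * (∑' k : ℕ, (k.choose (r+1) : ℝ) * (1/2:ℝ)^k) := by
      rw [← tsum_mul_left, ← tsum_mul_left, ← Summable.tsum_add ((sumC r).mul_left _) ((sumC (r+1)).mul_left _)]
      exact tsum_congr hshift
    rw [this, ih] at h0
    linarith


lemma cb_le_four_pow (m : ℕ) : (2*m).choose m ≤ 4 ^ m := by
  have h1 : (2*m).choose m ≤ ∑ j ∈ range (2*m + 1), (2*m).choose j :=
    Finset.single_le_sum (f := fun j => (2*m).choose j) (fun _ _ => Nat.zero_le _)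
      (by simp only [mem_range]; omega)
  have h2 := Nat.sum_range_choose (2*m)
  rw [h2] at h1
  calc (2*m).choose m ≤ 2 ^ (2*m) := h1
    _ = 4 ^ m := by rw [pow_mul]; norm_num

lemma catalan_le_four_pow (m : ℕ) : (catalan m : ℝ) ≤ 4 ^ m := by
  have h1 : catalan m ≤ (m+1) * catalan m := Nat.le_mul_of_pos_left _ (by omega)
  rw [succ_mul_catalan_eq_centralBinom, Nat.centralBinom_eq_two_mul_choose] at h1
  have := cb_le_four_pow m
  exact_mod_cast le_trans h1 this

variable {x : ℝ}

lemma summable_cat (hx0 : 0 ≤ x) (hx : 4 * x < 1) : Summable (fun m : ℕ => (catalan m : ℝ) * x ^ m) := by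
  apply Summable.of_nonneg_of_le (fun m => by positivity) (fun m => ?_)
    (summable_geometric_of_lt_one (by positivity) (by linarith) : Summable fun m : ℕ => (4*x)^m)
  calc (catalan m : ℝ) * x ^ m ≤ 4 ^ m * x ^ m :=
        mul_le_mul_of_nonneg_right (catalan_le_four_pow m) (by positivity)
    _ = (4*x)^m := by rw [mul_pow]

lemma summable_cb (hx0 : 0 ≤ x) (hx : 4 * x < 1) : Summable (fun m : ℕ => ((2*m).choose m : ℝ) * x ^ m) := by
  apply Summable.of_nonneg_of_le (fun m => by positivity) (fun m => ?_)
    (summable_geometric_of_lt_one (by positivity) (by linarith) : Summable fun m : ℕ => (4*x)^m)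
  have : ((2*m).choose m : ℝ) ≤ 4 ^ m := by exact_mod_cast cb_le_four_pow m
  calc ((2*m).choose m : ℝ) * x ^ m ≤ 4 ^ m * x ^ m :=
        mul_le_mul_of_nonneg_right this (by positivity)
    _ = (4*x)^m := by rw [mul_pow]

lemma cat_eq (hx0 : 0 ≤ x) (hx : 4 * x < 1) : (∑' m : ℕ, (catalan m : ℝ) * x ^ m)
    = 1 + x * (∑' m : ℕ, (catalan m : ℝ) * x ^ m) ^ 2 := by
  have hsum := summable_cat hx0 hx
  have hnorm : Summable (fun m : ℕ => ‖(catalan m : ℝ) * x ^ m‖) := by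
    apply hsum.congr
    intro m
    rw [Real.norm_eq_abs, abs_of_nonneg (by positivity)]
  have hc := tsum_mul_tsum_eq_tsum_sum_antidiagonal_of_summable_norm hnorm hnorm
  have hconv : Summable (fun n : ℕ => ∑ ij ∈ Finset.HasAntidiagonal.antidiagonal n,
      ((catalan ij.1 : ℝ) * x ^ ij.1) * ((catalan ij.2 : ℝ) * x ^ ij.2)) :=
    (summable_norm_sum_mul_antidiagonal_of_summable_norm hnorm hnorm).of_norm
  have h0 := Summable.tsum_eq_zero_add hsum
  rw [show (catalan 0 : ℝ) * x ^ 0 = 1 by simp] at h0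
  conv_lhs => rw [h0]
  congr 1
  have step : ∀ n : ℕ, (catalan (n+1) : ℝ) * x ^ (n+1)
      = x * ∑ ij ∈ Finset.HasAntidiagonal.antidiagonal n,
          ((catalan ij.1 : ℝ) * x ^ ij.1) * ((catalan ij.2 : ℝ) * x ^ ij.2) := by
    intro n
    rw [catalan_succ']
    push_cast
    rw [Finset.sum_mul, Finset.mul_sum]
    apply Finset.sum_congr rfl
    intro ij hij
    have := Finset.HasAntidiagonal.mem_antidiagonal.mp hij
    rw [← this, pow_add]
    push_cast
    ring
  calc ∑' n : ℕ, (catalan (n+1) : ℝ) * x ^ (n+1)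
      = ∑' n : ℕ, x * ∑ ij ∈ Finset.HasAntidiagonal.antidiagonal n,
          ((catalan ij.1 : ℝ) * x ^ ij.1) * ((catalan ij.2 : ℝ) * x ^ ij.2) := tsum_congr step
    _ = x * ∑' n : ℕ, ∑ ij ∈ Finset.HasAntidiagonal.antidiagonal n,
          ((catalan ij.1 : ℝ) * x ^ ij.1) * ((catalan ij.2 : ℝ) * x ^ ij.2) := tsum_mul_left
    _ = x * ((∑' m : ℕ, (catalan m : ℝ) * x ^ m) * (∑' m : ℕ, (catalan m : ℝ) * x ^ m)) := by
          rw [← hc]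
    _ = x * (∑' m : ℕ, (catalan m : ℝ) * x ^ m) ^ 2 := by ring


lemma tri_le (f : ℕ → ℝ) (hf : ∀ i, 0 ≤ f i) (N : ℕ) :
    ∑ n ∈ range N, ∑ ij ∈ antidiagonal n, f ij.1 * f ij.2 ≤ (∑ m ∈ range N, f m) ^ 2 := by
  have hdisj : (↑(range N) : Set ℕ).PairwiseDisjoint (fun n => antidiagonal n) := by
    intro i _ j _ hij
    simp only [Finset.disjoint_left]
    intro a ha hb
    rw [Finset.HasAntidiagonal.mem_antidiagonal] at ha hb
    exact hij (ha ▸ hb ▸ rfl)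
  rw [← Finset.sum_biUnion hdisj]
  have hsub : (range N).biUnion (fun n => antidiagonal n) ⊆ (range N) ×ˢ (range N) := by
    intro ij hij
    simp only [Finset.mem_biUnion, Finset.HasAntidiagonal.mem_antidiagonal, Finset.mem_range,
      Finset.mem_product] at *
    obtain ⟨n, hn, hsum⟩ := hij
    omega
  calc ∑ ij ∈ (range N).biUnion (fun n => antidiagonal n), f ij.1 * f ij.2
      ≤ ∑ ij ∈ (range N) ×ˢ (range N), f ij.1 * f ij.2 :=
        Finset.sum_le_sum_of_subset_of_nonneg hsub
          (fun ij _ _ => mul_nonneg (hf _) (hf _))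
    _ = (∑ m ∈ range N, f m) ^ 2 := by
        rw [Finset.sum_product, pow_two, Finset.sum_mul]
        exact Finset.sum_congr rfl fun i _ => by rw [Finset.mul_sum]

lemma cat_partial_le {x b : ℝ} (hx0 : 0 ≤ x) (hb0 : 0 ≤ b) (hb : 1 + x * b ^ 2 ≤ b) :
    ∀ N : ℕ, ∑ m ∈ range N, (catalan m : ℝ) * x ^ m ≤ b := by
  intro N
  induction N with
  | zero => simpa using hb0
  | succ N ih =>
    rw [Finset.sum_range_succ']
    have step : ∀ n : ℕ, (catalan (n+1) : ℝ) * x ^ (n+1)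
        = x * ∑ ij ∈ antidiagonal n,
            ((catalan ij.1 : ℝ) * x ^ ij.1) * ((catalan ij.2 : ℝ) * x ^ ij.2) := by
      intro n
      rw [catalan_succ']
      push_cast
      rw [Finset.sum_mul, Finset.mul_sum]
      apply Finset.sum_congr rfl
      intro ij hij
      have := Finset.HasAntidiagonal.mem_antidiagonal.mp hij
      rw [← this, pow_add]
      ring
    rw [Finset.sum_congr rfl (fun n _ => step n), ← Finset.mul_sum]
    have h1 := tri_le (fun m => (catalan m : ℝ) * x ^ m) (fun m => by positivity) N
    have hSnn : (0:ℝ) ≤ ∑ m ∈ range N, (catalan m : ℝ) * x ^ m :=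
      Finset.sum_nonneg fun m _ => by positivity
    have h2 : (∑ m ∈ range N, (catalan m : ℝ) * x ^ m) ^ 2 ≤ b ^ 2 :=
      pow_le_pow_left₀ hSnn ih 2
    have h3 : x * ∑ n ∈ range N, ∑ ij ∈ antidiagonal n,
        ((catalan ij.1 : ℝ) * x ^ ij.1) * ((catalan ij.2 : ℝ) * x ^ ij.2) ≤ x * b ^ 2 :=
      mul_le_mul_of_nonneg_left (le_trans h1 h2) hx0
    simp only [catalan_zero, Nat.cast_one, pow_zero, mul_one]
    linarith

lemma cb_rec (N : ℕ) : 4 * ((2*N).choose N) = (2*(N+1)).choose (N+1) + 2 * catalan N := by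
  apply Nat.eq_of_mul_eq_mul_left (show 0 < N + 1 by omega)
  have h1 := Nat.succ_mul_centralBinom_succ N
  have h2 := succ_mul_catalan_eq_centralBinom N
  rw [Nat.centralBinom_eq_two_mul_choose] at h2
  have h3 : (N + 1 + 1) * Nat.centralBinom (N+1) = (N+2) * ((2*(N+1)).choose (N+1)) := by
    rw [Nat.centralBinom_eq_two_mul_choose]
  simp only [Nat.centralBinom_eq_two_mul_choose] at h1
  -- h1 : (N+1) * (2*(N+1)).choose (N+1) = 2 * (2*N+1) * (2*N).choose N
  nlinarith [h1, h2]

lemma cb_partial (x : ℝ) (N : ℕ) :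
    (1 - 4*x) * ∑ m ∈ range N, ((2*m).choose m : ℝ) * x ^ m
      = 1 - ((2*N).choose N : ℝ) * x ^ N
        - 2 * x * ∑ m ∈ range N, (catalan m : ℝ) * x ^ m := by
  induction N with
  | zero => simp
  | succ N ih =>
    rw [Finset.sum_range_succ, Finset.sum_range_succ, mul_add, ih]
    have hc : ((2*(N+1)).choose (N+1) : ℝ) = 4 * ((2*N).choose N : ℝ) - 2 * (catalan N : ℝ) := by
      have := cb_rec N
      have := congrArg (Nat.cast (R := ℝ)) this
      push_cast at this
      linarith
    rw [hc]
    ring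



lemma cb_tsum {x : ℝ} (hx0 : 0 ≤ x) (hx : 4 * x < 1) :
    (1 - 4*x) * (∑' m : ℕ, ((2*m).choose m : ℝ) * x ^ m)
      = 1 - 2 * x * (∑' m : ℕ, (catalan m : ℝ) * x ^ m) := by
  have hf := (summable_cb hx0 hx).hasSum.tendsto_sum_nat
  have hy := (summable_cat hx0 hx).hasSum.tendsto_sum_nat
  have h4x : |4 * x| < 1 := by rw [abs_of_nonneg (by linarith)]; exact hx
  have ht0 : Tendsto (fun N : ℕ => ((2*N).choose N : ℝ) * x ^ N) atTop (nhds 0) := by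
    apply squeeze_zero (fun N => by positivity) (g := fun N => (4*x)^N)
    · intro N
      have h1 : ((2*N).choose N : ℝ) ≤ 4 ^ N := by exact_mod_cast cb_le_four_pow N
      calc ((2*N).choose N : ℝ) * x ^ N ≤ 4 ^ N * x ^ N :=
            mul_le_mul_of_nonneg_right h1 (by positivity)
        _ = (4*x)^N := by rw [mul_pow]
    · exact tendsto_pow_atTop_nhds_zero_of_lt_one (by linarith) hx
  have hL : Tendsto (fun N : ℕ => (1 - 4*x) * ∑ m ∈ range N, ((2*m).choose m : ℝ) * x ^ m)
      atTop (nhds ((1 - 4*x) * ∑' m : ℕ, ((2*m).choose m : ℝ) * x ^ m)) := hf.const_mul _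
  have hR : Tendsto (fun N : ℕ => 1 - ((2*N).choose N : ℝ) * x ^ N
      - 2 * x * ∑ m ∈ range N, (catalan m : ℝ) * x ^ m)
      atTop (nhds (1 - 0 - 2 * x * ∑' m : ℕ, (catalan m : ℝ) * x ^ m)) :=
    (tendsto_const_nhds.sub ht0).sub (hy.const_mul _)
  have := tendsto_nhds_unique (hL.congr (fun N => cb_partial x N)) hR
  rw [this]; ring

lemma main_vals (p : ℝ) (hp0 : 0 ≤ p) (hp : p < 1/2) :
    ∑' m : ℕ, ((2*m).choose m : ℝ) * (p * (1 - p)) ^ m = 1 / (1 - 2*p) := by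
  set q : ℝ := 1 - p with hq_def
  have hq : 1/2 < q := by simp [hq_def]; linarith
  have hq0 : 0 < q := by linarith
  set x : ℝ := p * q with hx_def
  have hx0 : 0 ≤ x := mul_nonneg hp0 (le_of_lt hq0)
  have hx : 4 * x < 1 := by nlinarith
  set y : ℝ := ∑' m : ℕ, (catalan m : ℝ) * x ^ m with hy_def
  have hy : y = 1 + x * y ^ 2 := cat_eq hx0 hx
  have hroot : 1 + x * (1/q) ^ 2 = 1/q := by
    field_simp
    rw [hx_def, hq_def]; ring
  have hyle : y ≤ 1/q :=
    Real.tsum_le_of_sum_range_le (fun m => by positivity)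
      (cat_partial_le hx0 (by positivity) (le_of_eq hroot))
  have hyeq : y = 1/q := by
    have hr2 : x * (1/q)^2 - 1/q + 1 = 0 := by linarith
    have hy2 : x * y^2 - y + 1 = 0 := by linarith
    have key : (1/q - y) * (x * (1/q + y) - 1) = 0 := by
      linear_combination hr2 - hy2
    have hynn : 0 ≤ y := tsum_nonneg (fun m => by positivity)
    have hlt : x * (1/q + y) - 1 < 0 := by
      have h1 : x * (1/q + y) ≤ x * (1/q + 1/q) :=
        mul_le_mul_of_nonneg_left (by linarith) hx0
      have h2 : x * (1/q + 1/q) = 2 * p := by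
        field_simp [hx_def]
        ring
      linarith
    rcases mul_eq_zero.mp key with h | h
    · linarith
    · linarith
  have hcb := cb_tsum hx0 hx
  rw [← hy_def, hyeq] at hcb
  have e1 : 1 - 2 * x * (1/q) = 1 - 2*p := by
    field_simp [hx_def]
    ring
  have e2 : 1 - 4 * x = (1 - 2*p)^2 := by
    rw [hx_def, hq_def]; ring
  rw [e1, e2] at hcb
  have h2p : (1 - 2*p) ≠ 0 := by linarith
  have : (∑' m : ℕ, ((2*m).choose m : ℝ) * x ^ m) = 1 / (1-2*p) := by
    have h3 : (1-2*p) * ((1-2*p) * (∑' m : ℕ, ((2*m).choose m : ℝ) * x ^ m) - 1) = 0 := by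
      linear_combination hcb
    rcases mul_eq_zero.mp h3 with h | h
    · exact absurd h h2p
    · rw [eq_div_iff h2p]; linarith
  rw [hx_def, hq_def] at this
  exact this



theorem stmt_19 (p : ℝ) (hp0 : 0 ≤ p) (hp : p < 1 / 2) :
    Summable (fun k : ℕ => ((1 - p) / 2) ^ k *
      ∑ j ∈ Finset.range (k + 1), ((k.choose j : ℝ)) ^ 2 * (p / (1 - p)) ^ j) ∧
    (1 / 2 - p) * ∑' k : ℕ, ((1 - p) / 2) ^ k *
      ∑ j ∈ Finset.range (k + 1), ((k.choose j : ℝ)) ^ 2 * (p / (1 - p)) ^ j = 1 := by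
  have hq0 : (0:ℝ) < 1 - p := by linarith
  have hq0' : (1 - p : ℝ) ≠ 0 := ne_of_gt hq0
  set q : ℝ := 1 - p with hq_def
  set x : ℝ := p * q with hx_def
  have hx0 : 0 ≤ x := mul_nonneg hp0 (le_of_lt hq0)
  have hx : 4 * x < 1 := by nlinarith
  -- step 0 + step A : rewrite the summand
  have key : ∀ k : ℕ, ((1 - p) / 2) ^ k *
      ∑ j ∈ Finset.range (k + 1), ((k.choose j : ℝ)) ^ 2 * (p / (1 - p)) ^ j
      = ∑ m ∈ range (k + 1),
          (k.choose (2 * m) : ℝ) * ((2 * m).choose m : ℝ) * x ^ m * (1/2 : ℝ) ^ k := by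
    intro k
    have e0 : ((1 - p) / 2 : ℝ) ^ k = q ^ k * (1/2 : ℝ) ^ k := by
      rw [← mul_pow]; congr 1; rw [hq_def]; ring
    have e1 : ∀ j ∈ range (k + 1),
        q ^ k * ((k.choose j : ℝ) ^ 2 * (p / q) ^ j)
          = (k.choose j : ℝ) ^ 2 * p ^ j * q ^ (k - j) := by
      intro j hj
      simp only [mem_range] at hj
      rw [div_pow]
      have hqk : q ^ k = q ^ j * q ^ (k - j) := by
        rw [← pow_add]; congr 1; omega
      rw [hqk]
      field_simp
    calc ((1 - p) / 2) ^ k * ∑ j ∈ range (k + 1), ((k.choose j : ℝ)) ^ 2 * (p / (1 - p)) ^ j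
        = (1/2:ℝ)^k * ∑ j ∈ range (k + 1), q ^ k * (((k.choose j : ℝ)) ^ 2 * (p / q) ^ j) := by
          rw [e0, Finset.mul_sum, Finset.mul_sum]
          exact Finset.sum_congr rfl fun j _ => by ring
      _ = (1/2:ℝ)^k * ∑ j ∈ range (k + 1), (k.choose j : ℝ) ^ 2 * p ^ j * q ^ (k - j) := by
          rw [Finset.sum_congr rfl e1]
      _ = (1/2:ℝ)^k * ∑ m ∈ range (k + 1),
            (k.choose (2 * m) : ℝ) * ((2 * m).choose m : ℝ) * x ^ m := by
          rw [stepA p q (by rw [hq_def]; ring) k]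
      _ = ∑ m ∈ range (k + 1),
            (k.choose (2 * m) : ℝ) * ((2 * m).choose m : ℝ) * x ^ m * (1/2:ℝ) ^ k := by
          rw [Finset.mul_sum]; exact Finset.sum_congr rfl fun m _ => by ring
  -- the doubly-indexed function
  set G : ℕ × ℕ → ℝ := fun km =>
    (km.1.choose (2 * km.2) : ℝ) * ((2 * km.2).choose km.2 : ℝ) * x ^ km.2 * (1/2:ℝ) ^ km.1
    with hG_def
  have hGnn : ∀ km, 0 ≤ G km := by
    intro km
    apply mul_nonneg (mul_nonneg (mul_nonneg (by positivity) (by positivity)) (by positivity))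
    positivity
  have hGz : ∀ k m, m ∉ range (k+1) → G (k, m) = 0 := by
    intro k m hm
    simp only [mem_range, not_lt] at hm
    have : k < 2 * m := by omega
    simp only [hG_def]
    rw [Nat.choose_eq_zero_of_lt this]
    push_cast; ring
  have hGrow : ∀ k, ∑' m : ℕ, G (k, m) = ∑ m ∈ range (k+1), G (k, m) := by
    intro k
    exact tsum_eq_sum (fun m hm => hGz k m hm)
  -- geometric bound
  set s : ℝ := Real.sqrt (4 * x) with hs_def
  have hs0 : 0 ≤ s := Real.sqrt_nonneg _
  have hs2 : s ^ 2 = 4 * x := Real.sq_sqrt (by linarith)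
  have hs1 : s < 1 := by
    rw [hs_def, show (1:ℝ) = Real.sqrt 1 by rw [Real.sqrt_one]]
    exact Real.sqrt_lt_sqrt (by linarith) hx
  have hbound : ∀ k, ∑ m ∈ range (k+1), G (k, m) ≤ ((1 + s)/2) ^ k := by
    intro k
    have h1 : ∀ m ∈ range (k+1), G (k, m)
        ≤ (k.choose (2*m) : ℝ) * s ^ (2*m) * (1/2:ℝ)^k := by
      intro m _
      simp only [hG_def]
      have hcb : ((2*m).choose m : ℝ) * x ^ m ≤ s ^ (2*m) := by
        have h4 : ((2*m).choose m : ℝ) ≤ 4 ^ m := by exact_mod_cast cb_le_four_pow m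
        calc ((2*m).choose m : ℝ) * x ^ m ≤ 4 ^ m * x ^ m :=
              mul_le_mul_of_nonneg_right h4 (by positivity)
          _ = (4*x) ^ m := (mul_pow 4 x m).symm
          _ = s ^ (2*m) := by rw [pow_mul, hs2]
      calc (k.choose (2*m) : ℝ) * ((2*m).choose m : ℝ) * x ^ m * (1/2:ℝ)^k
          = ((k.choose (2*m) : ℝ) * (((2*m).choose m : ℝ) * x ^ m)) * (1/2:ℝ)^k := by ring
        _ ≤ ((k.choose (2*m) : ℝ) * s ^ (2*m)) * (1/2:ℝ)^k := by
            apply mul_le_mul_of_nonneg_right _ (by positivity)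
            exact mul_le_mul_of_nonneg_left hcb (by positivity)
    have h2 : ∑ m ∈ range (k+1), (k.choose (2*m) : ℝ) * s ^ (2*m)
        ≤ ∑ j ∈ range (k+1), (k.choose j : ℝ) * s ^ j := by
      have himg : ∑ m ∈ range (k+1), (k.choose (2*m) : ℝ) * s ^ (2*m)
          = ∑ j ∈ (range (k+1)).image (fun m => 2*m), (k.choose j : ℝ) * s ^ j := by
        rw [Finset.sum_image (fun a _ b _ h => by omega)]
      rw [himg]
      have hsub1 : (range (k+1)).image (fun m => 2*m) ⊆ range (2*k+2) := by
        intro j hj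
        simp only [Finset.mem_image, mem_range] at *
        obtain ⟨m, hm, rfl⟩ := hj; omega
      calc ∑ j ∈ (range (k+1)).image (fun m => 2*m), (k.choose j : ℝ) * s ^ j
          ≤ ∑ j ∈ range (2*k+2), (k.choose j : ℝ) * s ^ j :=
            Finset.sum_le_sum_of_subset_of_nonneg hsub1 (fun j _ _ => by positivity)
        _ = ∑ j ∈ range (k+1), (k.choose j : ℝ) * s ^ j := by
            symm
            apply Finset.sum_subset (by intro a ha; simp only [mem_range] at *; omega)
            intro j _ hj
            simp only [mem_range, not_lt] at hj
            rw [Nat.choose_eq_zero_of_lt (show k < j by omega)]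
            push_cast; ring
    have h3 : ∑ j ∈ range (k+1), (k.choose j : ℝ) * s ^ j = (1 + s) ^ k := by
      have := add_pow s 1 k
      simp only [one_pow, mul_one] at this
      rw [show (1:ℝ) + s = s + 1 by ring, this]
      exact Finset.sum_congr rfl fun j _ => by ring
    calc ∑ m ∈ range (k+1), G (k, m)
        ≤ ∑ m ∈ range (k+1), (k.choose (2*m) : ℝ) * s ^ (2*m) * (1/2:ℝ)^k :=
          Finset.sum_le_sum h1
      _ = (∑ m ∈ range (k+1), (k.choose (2*m) : ℝ) * s ^ (2*m)) * (1/2:ℝ)^k := by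
          rw [Finset.sum_mul]
      _ ≤ (1+s)^k * (1/2:ℝ)^k := by
          rw [← h3]
          exact mul_le_mul_of_nonneg_right h2 (by positivity)
      _ = ((1+s)/2)^k := by rw [← mul_pow]; congr 1; ring
  have hsum_rows : Summable (fun k => ∑ m ∈ range (k+1), G (k, m)) := by
    apply Summable.of_nonneg_of_le
      (fun k => Finset.sum_nonneg fun m _ => hGnn _) hbound
    exact summable_geometric_of_lt_one (by positivity) (by linarith [hs0, hs1])
  have hGsummable : Summable G := by
    refine (summable_prod_of_nonneg (fun km => hGnn km)).mpr ⟨?_, ?_⟩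
    · intro k
      exact summable_of_ne_finset_zero (s := range (k+1)) (fun m hm => hGz k m hm)
    · exact hsum_rows.congr (fun k => (hGrow k).symm)
  have hcol : ∀ m : ℕ, ∑' k : ℕ, G (k, m) = ((2*m).choose m : ℝ) * x ^ m * 2 := by
    intro m
    calc ∑' k : ℕ, G (k, m)
        = ∑' k : ℕ, (((2*m).choose m : ℝ) * x ^ m) * ((k.choose (2*m) : ℝ) * (1/2:ℝ)^k) :=
          tsum_congr fun k => by simp only [hG_def]; ring
      _ = (((2*m).choose m : ℝ) * x ^ m) * ∑' k : ℕ, ((k.choose (2*m) : ℝ) * (1/2:ℝ)^k) :=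
          tsum_mul_left
      _ = ((2*m).choose m : ℝ) * x ^ m * 2 := by rw [tsumC (2*m)]
  have hswap : ∑' k : ℕ, ∑' m : ℕ, G (k, m) = ∑' m : ℕ, ∑' k : ℕ, G (k, m) :=
    (Summable.tsum_comm (f := fun k m => G (k, m)) hGsummable).symm
  have hxpq : x = p * (1 - p) := by rw [hx_def, hq_def]
  have hval : ∑' k : ℕ, ((1 - p) / 2) ^ k *
      ∑ j ∈ Finset.range (k + 1), ((k.choose j : ℝ)) ^ 2 * (p / (1 - p)) ^ j
      = 2 / (1 - 2*p) := by
    calc ∑' k : ℕ, ((1 - p) / 2) ^ k *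
        ∑ j ∈ Finset.range (k + 1), ((k.choose j : ℝ)) ^ 2 * (p / (1 - p)) ^ j
        = ∑' k : ℕ, ∑' m : ℕ, G (k, m) :=
          tsum_congr fun k => by rw [key k, ← hGrow k]
      _ = ∑' m : ℕ, ∑' k : ℕ, G (k, m) := hswap
      _ = ∑' m : ℕ, ((2*m).choose m : ℝ) * x ^ m * 2 := tsum_congr hcol
      _ = (∑' m : ℕ, ((2*m).choose m : ℝ) * x ^ m) * 2 := tsum_mul_right
      _ = (1 / (1 - 2*p)) * 2 := by rw [hxpq, main_vals p hp0 hp]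
      _ = 2 / (1 - 2*p) := by ring
  constructor
  · exact hsum_rows.congr (fun k => (key k).symm)
  · rw [hval]
    have h2p : (1 - 2*p) ≠ 0 := by intro h; apply absurd h; intro h2; nlinarith
    field_simp
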